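/- Let T be a finite tree with Hermitian edge weights and real potential, rooted at r, and let η be an eigenvector of A_T with eigenvalue λ such that η is nowhere zero. Then for every vertex v ≠ r and every ζ ∈ Ker(λ - A_T), one has ζ(v) η(p(v)) = ζ(p(v)) η(v) · |a_{p(v)←v}|²/|a_{v←p(v)}|² = ζ(p(v)) η(v), where p(v) is the parent of v; hence ζ = (ζ(r)/η(r)) η. -/

import Mathlib

open SimpleGraph Finset

open SimpleGraph Finset

private lemma shortest_support_bound {V : Type*} [DecidableEq V] {G : SimpleGraph V} {x r w : V}
    {P : G.Walk x r} (hlen : P.length = G.dist x r) (hw : w ∈ P.support) :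
    G.dist x w + G.dist w r ≤ G.dist x r := by
  have h1 : G.dist x w ≤ (P.takeUntil w hw).length := SimpleGraph.dist_le _
  have h2 : G.dist w r ≤ (P.dropUntil w hw).length := SimpleGraph.dist_le _
  have h3 := congrArg SimpleGraph.Walk.length (P.take_spec hw)
  rw [SimpleGraph.Walk.length_append] at h3
  omega

private lemma tree_adj_dist {V : Type*} [DecidableEq V] {G : SimpleGraph V} (hT : G.IsTree) (r : V)
    {a b : V} (hab : G.Adj a b) :
    G.dist r b + 1 = G.dist r a ∨ G.dist r a + 1 = G.dist r b := by
  have hconn := hT.isConnected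
  have h1 : G.dist a b = 1 := SimpleGraph.dist_eq_one_iff_adj.mpr hab
  have hba : G.dist b a = 1 := by rw [SimpleGraph.dist_comm]; exact h1
  have tri1 : G.dist r a ≤ G.dist r b + G.dist b a := hconn.dist_triangle
  have tri2 : G.dist r b ≤ G.dist r a + G.dist a b := hconn.dist_triangle
  have hne : G.dist r a ≠ G.dist r b := by
    intro heq
    obtain ⟨Pa, hPa, hPalen⟩ := hconn.exists_path_of_dist a r
    obtain ⟨Pb, hPb, hPblen⟩ := hconn.exists_path_of_dist b r
    have hcar : G.dist a r = G.dist r a := SimpleGraph.dist_comm ..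
    have hcbr : G.dist b r = G.dist r b := SimpleGraph.dist_comm ..
    have hbnot : b ∉ Pa.support := by
      intro hmem
      have := shortest_support_bound hPalen hmem
      omega
    have hq : (SimpleGraph.Walk.cons hab.symm Pa).IsPath := hPa.cons hbnot
    have heq2 := hT.IsAcyclic.path_unique ⟨_, hq⟩ ⟨Pb, hPb⟩
    have hlen := congrArg (fun q : G.Path b r => q.1.length) heq2
    simp only [SimpleGraph.Walk.length_cons] at hlen
    rw [hPalen, hPblen] at hlen
    omega
  omega

private lemma tree_parent_unique {V : Type*} [DecidableEq V] {G : SimpleGraph V} (hT : G.IsTree) (r : V)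
    {a b c : V} (hab : G.Adj a b) (hac : G.Adj a c)
    (hdb : G.dist r b + 1 = G.dist r a) (hdc : G.dist r c + 1 = G.dist r a) :
    b = c := by
  have hconn := hT.isConnected
  obtain ⟨Pb, hPb, hPblen⟩ := hconn.exists_path_of_dist b r
  obtain ⟨Pc, hPc, hPclen⟩ := hconn.exists_path_of_dist c r
  have hcar : G.dist a r = G.dist r a := SimpleGraph.dist_comm ..
  have hanb : a ∉ Pb.support := by
    intro hmem
    have h := shortest_support_bound hPblen hmem
    have h1 : G.dist b a = 1 := SimpleGraph.dist_eq_one_iff_adj.mpr hab.symm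
    have hcbr : G.dist b r = G.dist r b := SimpleGraph.dist_comm ..
    omega
  have hanc : a ∉ Pc.support := by
    intro hmem
    have h := shortest_support_bound hPclen hmem
    have h1 : G.dist c a = 1 := SimpleGraph.dist_eq_one_iff_adj.mpr hac.symm
    have hccr : G.dist c r = G.dist r c := SimpleGraph.dist_comm ..
    omega
  have hq1 : (SimpleGraph.Walk.cons hab Pb).IsPath := hPb.cons hanb
  have hq2 : (SimpleGraph.Walk.cons hac Pc).IsPath := hPc.cons hanc
  have heq := hT.IsAcyclic.path_unique ⟨_, hq1⟩ ⟨_, hq2⟩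
  have heqw : (SimpleGraph.Walk.cons hab Pb) = (SimpleGraph.Walk.cons hac Pc) :=
    congrArg Subtype.val heq
  injection heqw

private lemma neighbor_struct {V : Type*} [DecidableEq V] {G : SimpleGraph V}
    (hT : G.IsTree) (r : V) (p : V → V)
    (hp : ∀ v : V, v ≠ r → G.Adj v (p v) ∧ G.dist r (p v) + 1 = G.dist r v)
    {a b : V} (hab : G.Adj a b) :
    (a ≠ r ∧ b = p a) ∨ (b ≠ r ∧ a = p b) := by
  rcases tree_adj_dist hT r hab with h | h
  · have har : a ≠ r := by intro h'; rw [h', SimpleGraph.dist_self] at h; omega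
    exact Or.inl ⟨har, tree_parent_unique hT r hab (hp a har).1 h (hp a har).2⟩
  · have hbr : b ≠ r := by intro h'; rw [h', SimpleGraph.dist_self] at h; omega
    exact Or.inr ⟨hbr, tree_parent_unique hT r hab.symm (hp b hbr).1 h (hp b hbr).2⟩

section
variable {V : Type*} [Fintype V] [DecidableEq V] {G : SimpleGraph V}

private lemma key_identity (hT : G.IsTree) (A : Matrix V V ℂ) (hHerm : A.IsHermitian)
    (hsupp : ∀ u v : V, u ≠ v → ¬ G.Adj u v → A u v = 0)
    (r : V) (p : V → V)
    (hp : ∀ v : V, v ≠ r → G.Adj v (p v) ∧ G.dist r (p v) + 1 = G.dist r v)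
    (lam : ℝ) (η : V → ℂ) (hη : A.mulVec η = (lam : ℂ) • η)
    (ζ : V → ℂ) (hζ : A.mulVec ζ = (lam : ℂ) • ζ) (v : V) (hvr : v ≠ r) :
    (starRingEnd ℂ) (ζ v) * (A v (p v) * η (p v))
      = (starRingEnd ℂ) (ζ (p v)) * (A (p v) v * η v) := by
  classical
  have hconn := hT.isConnected
  have hd : ∀ u : V, u ≠ r → G.dist r (p u) + 1 = G.dist r u := fun u hu => (hp u hu).2
  -- the subtree below v
  set S : V → Prop := fun u => ∃ k, p^[k] u = v ∧ G.dist r u = k + G.dist r v with hSdef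
  have hSv : S v := ⟨0, rfl, by simp⟩
  have hSpv : ¬ S (p v) := by
    rintro ⟨k, hk, hdk⟩
    have := hd v hvr
    omega
  have hS3 : ∀ u w : V, S u → u ≠ v → G.Adj u w → S w := by
    intro u w hu huv hadj
    obtain ⟨k, hk, hdk⟩ := hu
    rcases neighbor_struct hT r p hp hadj with ⟨hur, rfl⟩ | ⟨hwr, rfl⟩
    · -- w = p u
      obtain ⟨k', rfl⟩ : ∃ k', k = k' + 1 := by
        rcases Nat.eq_zero_or_pos k with rfl | hkpos
        · exact absurd hk huv
        · exact ⟨k - 1, by omega⟩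
      refine ⟨k', ?_, ?_⟩
      · rw [← Function.iterate_succ_apply]; exact hk
      · have := hd u hur; omega
    · -- u = p w
      refine ⟨k + 1, ?_, ?_⟩
      · rw [Function.iterate_succ_apply]; exact hk
      · have := hd w hwr; omega
  have hS4 : ∀ w : V, G.Adj v w → ¬ S w → w = p v := by
    intro w hadj hw
    rcases neighbor_struct hT r p hp hadj with ⟨_, rfl⟩ | ⟨hwr, rfl⟩
    · rfl
    · exact absurd ⟨1, rfl, by have := hd w hwr; omega⟩ hw
  have hS5 : ∀ w : V, G.Adj (p v) w → S w → w = v := by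
    intro w hadj hw
    obtain ⟨k, hk, hdk⟩ := hw
    rcases neighbor_struct hT r p hp hadj with ⟨hpvr, rfl⟩ | ⟨hwr, hpw⟩
    · have h1 := hd v hvr
      have h2 := hd (p v) hpvr
      omega
    · -- p v = p w
      have h1 := hd v hvr
      have h2 := hd w hwr
      rw [← hpw] at h2
      have hk0 : k = 0 := by omega
      rw [hk0] at hk
      exact hk
  have hA0 : ∀ u w : V, A u w ≠ 0 → u = w ∨ G.Adj u w := by
    intro u w h
    by_contra hcon
    push_neg at hcon
    exact h (hsupp u w hcon.1 hcon.2)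
  set ξ : V → ℂ := fun u => if S u then η u else 0 with hξdef
  set g : V → ℂ := fun u => (lam : ℂ) * ξ u - ∑ w, A u w * ξ w with hgdef
  have hmv : ∀ f : V → ℂ, A.mulVec f = (lam : ℂ) • f → ∀ u, ∑ w, A u w * f w = (lam : ℂ) * f u := by
    intro f hf u
    have := congrFun hf u
    simpa [Matrix.mulVec, dotProduct] using this
  -- per-vertex values of g
  have hg0 : ∀ u : V, u ≠ v → u ≠ p v → g u = 0 := by
    intro u huv hupv
    by_cases hu : S u
    · have hsum : ∑ w, A u w * ξ w = ∑ w, A u w * η w := by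
        refine Finset.sum_congr rfl fun w _ => ?_
        by_cases hw : S w
        · simp [hξdef, hw]
        · have hA : A u w = 0 := by
            by_contra h
            rcases hA0 u w h with rfl | hadj
            · exact hw hu
            · exact hw (hS3 u w hu huv hadj)
          simp [hA]
      simp only [hgdef]
      rw [hsum]
      simp only [hξdef, hmv η hη u, hu, if_pos]
      ring
    · have hsum : ∀ w : V, A u w * ξ w = 0 := by
        intro w
        by_cases hw : S w
        · have hA : A u w = 0 := by
            by_contra h
            rcases hA0 u w h with rfl | hadj
            · exact hu hw
            · by_cases hwv : w = v
              · subst hwv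
                exact hupv (hS4 u hadj.symm hu)
              · exact hu (hS3 w u hw hwv hadj.symm)
          simp [hA]
        · simp [hξdef, hw]
      simp only [hgdef, hξdef, hu, if_neg, not_false_iff]
      rw [Finset.sum_eq_zero fun w _ => hsum w]
      simp [hu]
  have hgv : g v = A v (p v) * η (p v) := by
    have hsum : ∑ w, A v w * ξ w
        = ∑ w, (A v w * η w - if w = p v then A v (p v) * η (p v) else 0) := by
      refine Finset.sum_congr rfl fun w _ => ?_
      by_cases hw : S w
      · have hwpv : w ≠ p v := fun h => hSpv (h ▸ hw)
        simp [hξdef, hw, hwpv]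
      · by_cases hwpv : w = p v
        · subst hwpv; simp [hξdef, hw]
        · have hA : A v w = 0 := by
            by_contra h
            rcases hA0 v w h with rfl | hadj
            · exact hw hSv
            · exact hwpv (hS4 w hadj hw)
          simp [hξdef, hw, hA, hwpv]
    rw [hgdef]
    simp only [hξdef]
    rw [hsum, Finset.sum_sub_distrib, hmv η hη v, Finset.sum_ite_eq' Finset.univ (p v)
      (fun _ => A v (p v) * η (p v))]
    simp [hSv]
  have hgpv : g (p v) = -(A (p v) v * η v) := by
    have hsum : ∑ w, A (p v) w * ξ w
        = ∑ w, if w = v then A (p v) v * η v else 0 := by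
      refine Finset.sum_congr rfl fun w _ => ?_
      by_cases hwv : w = v
      · subst hwv; simp [hξdef, hSv]
      · by_cases hw : S w
        · have hA : A (p v) w = 0 := by
            by_contra h
            rcases hA0 (p v) w h with heq | hadj
            · exact hSpv (heq ▸ hw)
            · exact hwv (hS5 w hadj hw)
          simp [hA, hwv]
        · simp [hξdef, hw, hwv]
    rw [hgdef]
    simp only [hξdef]
    rw [hsum, Finset.sum_ite_eq' Finset.univ v (fun _ => A (p v) v * η v)]
    simp [hSpv]
  -- the global identity ∑ conj ζ * g = 0
  have hcol : ∀ w : V, ∑ u, (starRingEnd ℂ) (ζ u) * A u w = (lam : ℂ) * (starRingEnd ℂ) (ζ w) := by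
    intro w
    have h1 : ∀ u : V, (starRingEnd ℂ) (ζ u) * A u w = (starRingEnd ℂ) (A w u * ζ u) := by
      intro u
      rw [map_mul, ← hHerm.apply u w, Complex.star_def]
      ring
    rw [Finset.sum_congr rfl fun u _ => h1 u, ← map_sum]
    rw [hmv ζ hζ w]
    rw [map_mul]
    simp
  have E : ∑ u, (starRingEnd ℂ) (ζ u) * g u = 0 := by
    have step1 : ∑ u, (starRingEnd ℂ) (ζ u) * g u
        = (lam : ℂ) * ∑ u, (starRingEnd ℂ) (ζ u) * ξ u
          - ∑ u, ∑ w, ((starRingEnd ℂ) (ζ u) * A u w) * ξ w := by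
      rw [Finset.mul_sum, ← Finset.sum_sub_distrib]
      refine Finset.sum_congr rfl fun u _ => ?_
      rw [hgdef]
      simp only
      rw [mul_sub, Finset.mul_sum]
      congr 1
      · ring
      · exact Finset.sum_congr rfl fun w _ => by ring
    rw [step1, Finset.sum_comm]
    have step2 : ∀ w : V, ∑ u, ((starRingEnd ℂ) (ζ u) * A u w) * ξ w
        = (lam : ℂ) * ((starRingEnd ℂ) (ζ w) * ξ w) := by
      intro w
      rw [← Finset.sum_mul, hcol w]
      ring
    rw [Finset.sum_congr rfl fun w _ => step2 w, ← Finset.mul_sum]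
    ring
  -- restrict the sum to {v, p v}
  have hvpv : v ≠ p v := (hp v hvr).1.ne
  have hpair : ∑ u ∈ ({v, p v} : Finset V), (starRingEnd ℂ) (ζ u) * g u
      = ∑ u, (starRingEnd ℂ) (ζ u) * g u := by
    refine Finset.sum_subset (Finset.subset_univ _) fun u _ hu => ?_
    simp only [Finset.mem_insert, Finset.mem_singleton, not_or] at hu
    rw [hg0 u hu.1 hu.2, mul_zero]
  rw [E, Finset.sum_pair hvpv, hgv, hgpv] at hpair
  have := hpair
  linear_combination this
end

/-- On a finite rooted tree with Hermitian (nonzero on edges) weights, if `η`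
is a nowhere-zero `lam`-eigenvector of the Jacobi matrix `A` and `ζ ∈ Ker(lam - A)`, then
`ζ v * η (p v) = ζ (p v) * η v` for every non-root vertex `v` (the ratio
`|a_{p(v)←v}|²/|a_{v←p(v)}|² = 1` being absorbed), and hence `ζ = (ζ r / η r) • η`. -/
theorem stmt_17 {V : Type*} [Fintype V] [DecidableEq V] (G : SimpleGraph V)
    (hT : G.IsTree) (A : Matrix V V ℂ) (hHerm : A.IsHermitian)
    (hsupp : ∀ u v : V, u ≠ v → ¬ G.Adj u v → A u v = 0)
    (hnz : ∀ u v : V, G.Adj u v → A u v ≠ 0)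
    (r : V) (p : V → V)
    (hp : ∀ v : V, v ≠ r → G.Adj v (p v) ∧ G.dist r (p v) + 1 = G.dist r v)
    (lam : ℝ) (η : V → ℂ) (hη : A.mulVec η = (lam : ℂ) • η)
    (hηnz : ∀ v : V, η v ≠ 0)
    (ζ : V → ℂ) (hζ : A.mulVec ζ = (lam : ℂ) • ζ) :
    (∀ v : V, v ≠ r → ζ v * η (p v) = ζ (p v) * η v) ∧
    (∀ v : V, ζ v = (ζ r / η r) * η v) := by
  have hconn := hT.isConnected
  have part1 : ∀ v : V, v ≠ r → ζ v * η (p v) = ζ (p v) * η v := by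
    intro v hvr
    have hC : A v (p v) * η (p v) ≠ 0 := mul_ne_zero (hnz v (p v) (hp v hvr).1) (hηnz _)
    have k1 := key_identity hT A hHerm hsupp r p hp lam η hη ζ hζ v hvr
    have k2 := key_identity hT A hHerm hsupp r p hp lam η hη η hη v hvr
    have hmain : (starRingEnd ℂ) (ζ v) * (starRingEnd ℂ) (η (p v))
        = (starRingEnd ℂ) (ζ (p v)) * (starRingEnd ℂ) (η v) := by
      apply mul_right_cancel₀ hC
      linear_combination (starRingEnd ℂ) (η (p v)) * k1 - (starRingEnd ℂ) (ζ (p v)) * k2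
    have hc : (starRingEnd ℂ) (ζ v * η (p v)) = (starRingEnd ℂ) (ζ (p v) * η v) := by
      rw [map_mul, map_mul]; exact hmain
    exact (starRingEnd ℂ).injective hc
  refine ⟨part1, ?_⟩
  have part2 : ∀ n : ℕ, ∀ v : V, G.dist r v ≤ n → ζ v = ζ r / η r * η v := by
    intro n
    induction n with
    | zero =>
      intro v hv
      obtain rfl := hconn.dist_eq_zero_iff.mp (Nat.le_zero.mp hv)
      rw [div_mul_cancel₀ _ (hηnz r)]
    | succ n ih =>
      intro v hv
      by_cases hvr : v = r
      · subst hvr; rw [div_mul_cancel₀ _ (hηnz v)]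
      · have hdpv : G.dist r (p v) ≤ n := by have := (hp v hvr).2; omega
        have hIH := ih (p v) hdpv
        have h1 := part1 v hvr
        rw [hIH] at h1
        have hcan : ζ v * η (p v) = (ζ r / η r * η v) * η (p v) := by linear_combination h1
        exact mul_right_cancel₀ (hηnz (p v)) hcan
  exact fun v => part2 (G.dist r v) v le_rfl
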